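/- Let R be a commutative ring with identity and let P be a non-maximal prime ideal of R. Then either P equals the intersection of all prime ideals of R that properly contain P, or there exists a sequence (I_n) of ideals, each properly containing P, such that P = ⋂ I_n. -/
import Mathlib


theorem stmt_0 {R : Type*} [CommRing R] (P : Ideal R) (hP : P.IsPrime)
    (hnm : ¬ P.IsMaximal) :
    P = sInf {Q : Ideal R | Q.IsPrime ∧ P < Q} ∨
      ∃ I : ℕ → Ideal R, (∀ n, P < I n) ∧ P = ⨅ n, I n := by
  by_cases h : P = sInf {Q : Ideal R | Q.IsPrime ∧ P < Q}
  · exact Or.inl h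
  right
  have hPle : P ≤ sInf {Q : Ideal R | Q.IsPrime ∧ P < Q} :=
    le_sInf fun Q hQ => le_of_lt hQ.2
  obtain ⟨x, hxI, hxP⟩ : ∃ x, x ∈ sInf {Q : Ideal R | Q.IsPrime ∧ P < Q} ∧ x ∉ P := by
    by_contra hc
    push_neg at hc
    exact h (le_antisymm hPle fun y hy => hc y hy)
  refine ⟨fun n => P ⊔ Ideal.span {x ^ n}, ?_, ?_⟩
  · intro n
    show P < P ⊔ Ideal.span {x ^ n}
    rcases Nat.eq_zero_or_pos n with rfl | hn
    · have h0 : (P : Ideal R) ⊔ Ideal.span {x ^ 0} = ⊤ := by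
        simp [Ideal.span_singleton_one]
      rw [h0]
      exact lt_top_iff_ne_top.mpr hP.ne_top
    · have hxn : x ^ n ∉ P := fun hx => hxP (hP.mem_of_pow_mem n hx)
      have hmem : x ^ n ∈ P ⊔ Ideal.span {x ^ n} :=
        Ideal.mem_sup_right (Ideal.subset_span rfl)
      exact lt_of_le_of_ne le_sup_left fun e => hxn (e ▸ hmem)
  · refine le_antisymm (le_iInf fun n => le_sup_left) ?_
    intro y hy
    by_contra hyP
    -- x is in the radical of P ⊔ (y)
    have hrad : x ∈ (P ⊔ Ideal.span {y}).radical := by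
      rw [Ideal.radical_eq_sInf]
      refine Ideal.mem_sInf.mpr ?_
      rintro Q ⟨hle, hQp⟩
      have hyQ : y ∈ Q := hle (Ideal.mem_sup_right (Ideal.subset_span rfl))
      have hPQ : P < Q :=
        lt_of_le_of_ne (le_trans le_sup_left hle) fun e => hyP (e ▸ hyQ)
      exact Ideal.mem_sInf.mp hxI ⟨hQp, hPQ⟩
    obtain ⟨n, hn⟩ := hrad
    obtain ⟨p, hp, z', hz', hts⟩ := Submodule.mem_sup.mp hn
    obtain ⟨z, rfl⟩ := Ideal.mem_span_singleton'.mp hz'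
    -- y ∈ I (n+1)
    have hy1 : y ∈ P ⊔ Ideal.span {x ^ (n + 1)} := Ideal.mem_iInf.mp hy (n + 1)
    obtain ⟨p', hp', w', hw', hts'⟩ := Submodule.mem_sup.mp hy1
    obtain ⟨w, rfl⟩ := Ideal.mem_span_singleton'.mp hw'
    -- x^n * (1 - z*w*x) ∈ P
    have key : x ^ n * (1 - z * w * x) ∈ P := by
      have : x ^ n * (1 - z * w * x) = p + z * p' := by
        linear_combination -hts - z * hts'
      rw [this]
      exact P.add_mem hp (P.mul_mem_left z hp')
    have h1P : (1 - z * w * x) ∈ P := by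
      rcases hP.mem_or_mem key with hxn | h1
      · exact absurd (hP.mem_of_pow_mem n hxn) hxP
      · exact h1
    obtain ⟨M, hM, hPM⟩ := Ideal.exists_le_maximal P hP.ne_top
    have hPltM : P < M := lt_of_le_of_ne hPM fun e => hnm (e ▸ hM)
    have hxM : x ∈ M := Ideal.mem_sInf.mp hxI ⟨hM.isPrime, hPltM⟩
    have h1M : (1 : R) ∈ M := by
      have : (1 : R) = (1 - z * w * x) + (z * w) * x := by ring
      rw [this]
      exact M.add_mem (hPM h1P) (M.mul_mem_left _ hxM)
    exact hM.ne_top (Ideal.eq_top_iff_one M |>.mpr h1M)
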